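/- Let n ≥ 2 and r > 0, and let φ : ℝ^n → ℝ be a bounded continuously differentiable function. Denote by Ω(φ) := {φ > 0} the positive set of φ, and assume Ω(φ) is bounded, contains B_r(0), and Dφ ≠ 0 on ∂Ω(φ). Then Ω(φ) ∈ S_r if and only if for every x ∈ ∂Ω(φ) one has x · ( −Dφ(x)/|Dφ(x)| ) ≥ r. -/

import Mathlib

open MeasureTheory Metric Set
open scoped ENNReal RealInnerProductSpace

noncomputable section

lemma dir_nonneg {n : ℕ} (φ : EuclideanSpace ℝ (Fin n) → ℝ) (hC1 : ContDiff ℝ 1 φ)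
    (z v : EuclideanSpace ℝ (Fin n)) (ε : ℝ) (hε : 0 < ε) (h0 : φ z = 0)
    (hpos : ∀ t ∈ Set.Ioc (0:ℝ) ε, 0 ≤ φ (z + t • v)) :
    0 ≤ ⟪gradient φ z, v⟫ := by
  have hd : DifferentiableAt ℝ φ z := (hC1.differentiable one_ne_zero) z
  have hγ : HasDerivAt (fun t : ℝ => z + t • v) v 0 := by
    simpa using ((hasDerivAt_id (0:ℝ)).smul_const v).const_add z
  have hF : HasFDerivAt φ (InnerProductSpace.toDual ℝ _ (gradient φ z)) z := by
    have := hd.hasGradientAt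
    rwa [hasGradientAt_iff_hasFDerivAt] at this
  have hf : HasDerivAt (fun t : ℝ => φ (z + t • v)) ⟪gradient φ z, v⟫ 0 := by
    have hF' : HasFDerivAt φ (InnerProductSpace.toDual ℝ _ (gradient φ z))
        ((fun t : ℝ => z + t • v) 0) := by simpa using hF
    have h := hF'.comp_hasDerivAt (0:ℝ) hγ
    exact h
  rw [hasDerivAt_iff_tendsto_slope] at hf
  have hsub : Set.Ioi (0:ℝ) ⊆ {(0:ℝ)}ᶜ := fun t ht => ne_of_gt ht
  have hf' := hf.mono_left (nhdsWithin_mono 0 hsub)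
  refine ge_of_tendsto hf' ?_
  filter_upwards [Ioc_mem_nhdsGT_of_mem (Set.mem_Ico.mpr ⟨le_rfl, hε⟩)] with t ht
  have hnum : 0 ≤ φ (z + t • v) := hpos t ht
  have hs : slope (fun t : ℝ => φ (z + t • v)) 0 t = φ (z + t • v) / t := by
    simp [slope_def_field, h0]
  rw [hs]
  exact div_nonneg hnum ht.1.le

/-- `Ω` is a bounded open set, star-shaped with respect to the ball `B_r(0)`. -/
def StarShaped (n : ℕ) (r : ℝ) (Ω : Set (EuclideanSpace ℝ (Fin n))) : Prop :=
  IsOpen Ω ∧ Bornology.IsBounded Ω ∧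
    ∀ y ∈ ball (0 : EuclideanSpace ℝ (Fin n)) r, ∀ x ∈ Ω, segment ℝ y x ⊆ Ω

/-- For a bounded `C¹` function `φ` whose positive set `Ω(φ) = {φ > 0}` is bounded,
contains `B_r(0)`, and with `Dφ ≠ 0` on `∂Ω(φ)`, one has `Ω(φ) ∈ S_r` if and only if
`x · (-Dφ(x)/|Dφ(x)|) ≥ r` for every `x ∈ ∂Ω(φ)`. -/
theorem statement11 (n : ℕ) (hn : 2 ≤ n) (r : ℝ) (hr : 0 < r)
    (φ : EuclideanSpace ℝ (Fin n) → ℝ) (hC1 : ContDiff ℝ 1 φ)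
    (hbdd : ∃ M : ℝ, ∀ x, |φ x| ≤ M)
    (hΩbdd : Bornology.IsBounded {x | 0 < φ x})
    (hball : ball (0 : EuclideanSpace ℝ (Fin n)) r ⊆ {x | 0 < φ x})
    (hgrad : ∀ x ∈ frontier {x | 0 < φ x}, gradient φ x ≠ 0) :
    StarShaped n r {x | 0 < φ x} ↔
      ∀ x ∈ frontier {x | 0 < φ x},
        r ≤ ⟪x, -(‖gradient φ x‖⁻¹ • gradient φ x)⟫ := by
  set Ω : Set (EuclideanSpace ℝ (Fin n)) := {x | 0 < φ x} with hΩ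
  have hcont : Continuous φ := hC1.continuous
  have hΩopen : IsOpen Ω := isOpen_lt continuous_const hcont
  -- frontier points have φ = 0
  have hfr0 : ∀ x ∈ frontier Ω, φ x = 0 := by
    intro x hx
    have h1 : x ∈ closure Ω := hx.1
    have h2 : x ∉ Ω := by
      have := hx.2
      rwa [hΩopen.interior_eq] at this
    have hge : 0 ≤ φ x := by
      have hcl : closure Ω ⊆ {x | 0 ≤ φ x} :=
        closure_minimal (fun a ha => show (0:ℝ) ≤ φ a from le_of_lt ha)
          (isClosed_le continuous_const hcont)
      exact hcl h1
    exact le_antisymm (not_lt.mp h2) hge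
  constructor
  · -- star-shaped → boundary inequality
    intro hSS x hx
    set g := gradient φ x with hg
    have hgne : g ≠ 0 := hgrad x hx
    have hgpos : 0 < ‖g‖ := norm_pos_iff.mpr hgne
    -- step: for every y in ball, 0 ≤ ⟪g, y - x⟫
    have key : ∀ y ∈ ball (0 : EuclideanSpace ℝ (Fin n)) r, 0 ≤ ⟪g, y - x⟫ := by
      intro y hy
      refine dir_nonneg φ hC1 x (y - x) 1 one_pos (hfr0 x hx) ?_
      intro t ht
      rcases eq_or_lt_of_le ht.2 with h1 | h1
      · have : x + t • (y - x) = y := by rw [h1]; module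
        rw [this]
        exact le_of_lt (hball hy)
      · -- 0 < t < 1 : approximate x by points of Ω
        by_contra hneg
        push_neg at hneg
        set p := x + t • (y - x) with hp
        have hpU : p ∈ φ ⁻¹' (Iio 0) := hneg
        have hUopen : IsOpen (φ ⁻¹' (Iio 0)) := isOpen_Iio.preimage hcont
        obtain ⟨ε, hε, hball'⟩ := Metric.isOpen_iff.mp hUopen p hpU
        have hxcl : x ∈ closure Ω := hx.1
        have hδpos : 0 < ε / (1 - t) := div_pos hε (by linarith)
        obtain ⟨x', hx'Ω, hx'd⟩ := Metric.mem_closure_iff.mp hxcl (ε / (1 - t)) hδpos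
        set p' := x' + t • (y - x') with hp'
        have hp'seg : p' ∈ segment ℝ y x' := by
          rw [segment_eq_image']
          exact ⟨1 - t, ⟨by linarith [ht.1], by linarith [ht.1]⟩, by rw [hp']; module⟩
        have hp'Ω : p' ∈ Ω := hSS.2.2 y hy x' hx'Ω hp'seg
        have hdist : dist p' p < ε := by
          have : p' - p = (1 - t) • (x' - x) := by rw [hp', hp]; module
          rw [dist_eq_norm, this, norm_smul]
          have h1t : 0 < 1 - t := by linarith
          rw [Real.norm_eq_abs, abs_of_pos h1t]
          calc (1 - t) * ‖x' - x‖ < (1 - t) * (ε / (1 - t)) := by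
                apply mul_lt_mul_of_pos_left _ h1t
                rwa [← dist_eq_norm, dist_comm]
            _ = ε := by rw [mul_comm]; exact div_mul_cancel₀ ε (ne_of_gt h1t)
        have : p' ∈ φ ⁻¹' (Iio 0) := hball' (Metric.mem_ball.mpr hdist)
        have : φ p' < 0 := this
        have : (0:ℝ) < φ p' := hp'Ω
        linarith
    -- conclude r ≤ ⟪x, -(‖g‖⁻¹ • g)⟫
    have hineq : ∀ c ∈ Ico (0:ℝ) r, c * ‖g‖ ≤ -⟪g, x⟫ := by
      intro c hc
      have hy : -(c • (‖g‖⁻¹ • g)) ∈ ball (0 : EuclideanSpace ℝ (Fin n)) r := by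
        rw [mem_ball_zero_iff, norm_neg, norm_smul, norm_smul, norm_inv, norm_norm,
          Real.norm_eq_abs, abs_of_nonneg hc.1]
        rw [inv_mul_cancel₀ (ne_of_gt hgpos)]
        simpa using hc.2
      have := key _ hy
      rw [inner_sub_right, inner_neg_right, real_inner_smul_right, real_inner_smul_right,
        real_inner_self_eq_norm_sq] at this
      have hsimp : ‖g‖⁻¹ * ‖g‖ ^ 2 = ‖g‖ := by
        rw [sq]; field_simp
      rw [hsimp] at this
      linarith
    have hfinal : r * ‖g‖ ≤ -⟪g, x⟫ := by
      have htends : Filter.Tendsto (fun c : ℝ => c * ‖g‖) (nhdsWithin r (Iio r)) (nhds (r * ‖g‖)) :=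
        (Filter.tendsto_id.mono_left nhdsWithin_le_nhds).mul_const _
      refine le_of_tendsto htends ?_
      filter_upwards [Ioo_mem_nhdsLT_of_mem (Set.mem_Ioc.mpr ⟨(by linarith : (0:ℝ) < r), le_rfl⟩)] with c hc
      exact hineq c ⟨hc.1.le, hc.2⟩
    rw [inner_neg_right, real_inner_smul_right]
    have hxg : ⟪x, g⟫ = ⟪g, x⟫ := real_inner_comm _ _
    rw [hxg]
    calc r = ‖g‖⁻¹ * (r * ‖g‖) := by field_simp
      _ ≤ ‖g‖⁻¹ * (-⟪g, x⟫) := by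
          exact mul_le_mul_of_nonneg_left hfinal (inv_nonneg.mpr hgpos.le)
      _ = -(‖g‖⁻¹ * ⟪g, x⟫) := by ring
  · -- boundary inequality → star-shaped
    intro h
    refine ⟨hΩopen, hΩbdd, ?_⟩
    intro y hy x hxΩ p hp
    rw [segment_eq_image'] at hp
    obtain ⟨t, htI, rfl⟩ := hp
    by_contra hneg
    have hneg' : φ (y + t • (x - y)) ≤ 0 := not_lt.mp hneg
    set f : ℝ → ℝ := fun s => φ (y + s • (x - y)) with hf
    have hfc : Continuous f := by
      apply hcont.comp
      exact continuous_const.add (continuous_id.smul continuous_const)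
    set S : Set ℝ := Icc 0 1 ∩ f ⁻¹' (Iic 0) with hS
    have hSne : S.Nonempty := ⟨t, htI, hneg'⟩
    have hSbdd : BddAbove S := (isCompact_Icc.inter_right (isClosed_Iic.preimage hfc)).bddAbove
    have hSclosed : IsClosed S := isClosed_Icc.inter (isClosed_Iic.preimage hfc)
    set t₀ := sSup S with ht₀
    have ht₀S : t₀ ∈ S := hSclosed.csSup_mem hSne hSbdd
    have hf0 : 0 < f 0 := by
      have : y + (0:ℝ) • (x - y) = y := by module
      rw [hf]; simp only [this]; exact hball hy
    have hf1 : 0 < f 1 := by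
      have : y + (1:ℝ) • (x - y) = x := by module
      rw [hf]; simp only [this]; exact hxΩ
    have ht₀0 : 0 < t₀ := by
      rcases lt_or_eq_of_le ht₀S.1.1 with h' | h'
      · exact h'
      · exfalso; have := ht₀S.2; rw [← h'] at this; exact absurd hf0 (not_lt.mpr this)
    have ht₀1 : t₀ < 1 := by
      rcases lt_or_eq_of_le ht₀S.1.2 with h' | h'
      · exact h'
      · exfalso; have := ht₀S.2; rw [h'] at this; exact absurd hf1 (not_lt.mpr this)
    have hfpos : ∀ s ∈ Ioc t₀ 1, 0 < f s := by
      intro s hs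
      by_contra hcon
      push_neg at hcon
      have hsS : s ∈ S := ⟨⟨le_trans ht₀0.le hs.1.le, hs.2⟩, hcon⟩
      exact absurd (le_csSup hSbdd hsS) (not_le.mpr hs.1)
    set z := y + t₀ • (x - y) with hz
    have hfz_le : φ z ≤ 0 := ht₀S.2
    have hfz_ge : 0 ≤ φ z := by
      have htends : Filter.Tendsto f (nhdsWithin t₀ (Ioi t₀)) (nhds (f t₀)) :=
        (hfc.continuousAt.tendsto).mono_left nhdsWithin_le_nhds
      refine ge_of_tendsto htends ?_
      filter_upwards [Ioc_mem_nhdsGT_of_mem (Set.mem_Ico.mpr ⟨le_rfl, ht₀1⟩)] with s hs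
      exact (hfpos s hs).le
    have hfz : φ z = 0 := le_antisymm hfz_le hfz_ge
    have hzfr : z ∈ frontier Ω := by
      constructor
      · have htead : Filter.Tendsto (fun s : ℝ => y + s • (x - y))
            (nhdsWithin t₀ (Ioi t₀)) (nhds z) :=
          ((continuous_const.add (continuous_id.smul continuous_const)).continuousAt.tendsto).mono_left
            nhdsWithin_le_nhds
        refine mem_closure_of_tendsto htead ?_
        filter_upwards [Ioc_mem_nhdsGT_of_mem (Set.mem_Ico.mpr ⟨le_rfl, ht₀1⟩)] with s hs
        exact hfpos s hs
      · rw [hΩopen.interior_eq]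
        intro hcon
        exact absurd hfz (ne_of_gt hcon)
    set g := gradient φ z with hg
    have hgne : g ≠ 0 := hgrad z hzfr
    have hgpos : 0 < ‖g‖ := norm_pos_iff.mpr hgne
    have hderiv : 0 ≤ ⟪g, x - y⟫ := by
      refine dir_nonneg φ hC1 z (x - y) (1 - t₀) (by linarith) hfz ?_
      intro s hs
      have heq : z + s • (x - y) = y + (t₀ + s) • (x - y) := by rw [hz]; module
      rw [heq]
      exact (hfpos (t₀ + s) ⟨by linarith [hs.1], by linarith [hs.2]⟩).le
    have hzg : ⟪g, z⟫ ≤ -(r * ‖g‖) := by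
      have h1 := h z hzfr
      rw [inner_neg_right, real_inner_smul_right, real_inner_comm] at h1
      have h2 := mul_le_mul_of_nonneg_right h1 hgpos.le
      have h4 : -(‖g‖⁻¹ * ⟪g, z⟫) * ‖g‖ = -⟪g, z⟫ := by
        field_simp
      rw [h4] at h2
      linarith
    have hinner_z : ⟪g, z⟫ = ⟪g, y⟫ + t₀ * ⟪g, x - y⟫ := by
      rw [hz, inner_add_right, real_inner_smul_right]
    have hyn : ‖y‖ < r := mem_ball_zero_iff.mp hy
    have hlow : -(‖g‖ * ‖y‖) ≤ ⟪g, y⟫ := by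
      have := abs_real_inner_le_norm g y
      cases abs_le.mp this with
      | intro h1 h2 => linarith
    linarith [mul_nonneg ht₀0.le hderiv, mul_lt_mul_of_pos_left hyn hgpos, hinner_z, hzg, hlow]
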